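/- Let g and (h_i)_{i∈ψ} be independent random variables, each exponentially distributed with rate 1, where ψ is a nonempty finite index set. Fix r>0, α≥2, distances d_i>0 for i∈ψ, and N≥0. Define the SINR η = g r^{-α} / (N + Σ_{i∈ψ} h_i d_i^{-α}). Then for every T ≥ 0, the coverage probability satisfies P(η > T) = e^{-T r^α N} · ∏_{i∈ψ} (1 + T r^α d_i^{-α})^{-1}. -/

import Mathlib

open MeasureTheory ProbabilityTheory Real Set




lemma expMeasure_apply {r : ℝ} {s : Set ℝ} (hs : MeasurableSet s) :
    expMeasure r s = ∫⁻ x in s, exponentialPDF r x := by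
  rw [expMeasure, gammaMeasure, withDensity_apply _ hs]
  rfl

lemma expMeasure_Iic (x : ℝ) :
    expMeasure 1 (Iic x) = ENNReal.ofReal (if 0 ≤ x then 1 - rexp (-x) else 0) := by
  rw [expMeasure_apply measurableSet_Iic, lintegral_exponentialPDF_eq_antiDeriv one_pos x]
  simp

lemma expMeasure_Ioi {a : ℝ} (ha : 0 ≤ a) :
    expMeasure 1 (Ioi a) = ENNReal.ofReal (rexp (-a)) := by
  have : IsProbabilityMeasure (expMeasure 1) := isProbabilityMeasure_expMeasure one_pos
  have h1 : Ioi a = (Iic a)ᶜ := by simp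
  rw [h1, measure_compl measurableSet_Iic (measure_ne_top _ _), measure_univ,
    expMeasure_Iic, if_pos ha, ← ENNReal.ofReal_one,
    ← ENNReal.ofReal_sub _ (sub_nonneg.mpr (Real.exp_le_one_iff.mpr (by linarith)))]
  norm_num

lemma expMeasure_Iic_zero : expMeasure 1 (Iic 0) = 0 := by
  rw [expMeasure_Iic]; simp

lemma integral_exp_neg_mul_expMeasure {t : ℝ} (ht : 0 ≤ t) :
    ∫ x, rexp (-t * x) ∂(expMeasure 1) = (1 + t)⁻¹ := by
  have hmeas : Measurable fun x : ℝ => ENNReal.ofReal (rexp (-t * x)) :=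
    (measurable_const.mul measurable_id').exp.ennreal_ofReal
  have hb : (0:ℝ) < 1 + t := by linarith
  rw [integral_eq_lintegral_of_nonneg_ae (f := fun x => rexp (-t * x)) (ae_of_all _ fun x => (exp_pos _).le)
    ((measurable_const.mul measurable_id').exp.aestronglyMeasurable)]
  have h1 : ∫⁻ x, ENNReal.ofReal (rexp (-t * x)) ∂(expMeasure 1)
      = ∫⁻ x, (Ici (0:ℝ)).indicator (fun x => ENNReal.ofReal (rexp (-(1 + t) * x))) x := by
    have hpdf : Measurable (gammaPDF 1 1) := (measurable_gammaPDFReal 1 1).ennreal_ofReal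
    rw [expMeasure, gammaMeasure]
    rw [lintegral_withDensity_eq_lintegral_mul _ hpdf hmeas]
    refine lintegral_congr fun x => ?_
    by_cases hx : 0 ≤ x
    · simp only [Set.indicator_apply, mem_Ici, if_pos hx]
      rw [Pi.mul_apply, show gammaPDF 1 1 x = exponentialPDF 1 x from rfl]
      rw [exponentialPDF_of_nonneg hx, ← ENNReal.ofReal_mul (by positivity)]
      congr 1
      rw [one_mul, ← Real.exp_add]
      ring_nf
    · simp only [Set.indicator_apply, mem_Ici, if_neg hx]
      rw [Pi.mul_apply, show gammaPDF 1 1 x = exponentialPDF 1 x from rfl]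
      rw [exponentialPDF_of_neg (lt_of_not_ge hx), zero_mul]
  rw [h1, lintegral_indicator measurableSet_Ici _,
    ← Measure.restrict_congr_set Ioi_ae_eq_Ici]
  have hint : IntegrableOn (fun x => rexp (-(1 + t) * x)) (Ioi 0) :=
    exp_neg_integrableOn_Ioi 0 hb
  rw [← ofReal_integral_eq_lintegral_ofReal hint (ae_of_all _ fun x => (exp_pos _).le)]
  have h2 : ∫ x in Ioi (0:ℝ), rexp (-(1 + t) * x) = (1 + t)⁻¹ := by
    have := integral_comp_mul_left_Ioi (fun y => rexp (-y)) 0 hb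
    simp only [mul_zero, integral_exp_neg_Ioi, neg_zero, Real.exp_zero, smul_eq_mul,
      mul_one] at this
    calc ∫ x in Ioi (0:ℝ), rexp (-(1 + t) * x)
        = ∫ x in Ioi (0:ℝ), rexp (-((1 + t) * x)) := by simp only [neg_mul]
      _ = (1 + t)⁻¹ := this
  rw [h2, ENNReal.toReal_ofReal (by positivity)]

lemma iIndepFun_some {Ω ι : Type*} [MeasurableSpace Ω] {μ : Measure Ω}
    {f : Option ι → Ω → ℝ}
    (hf : iIndepFun f μ) :
    iIndepFun (fun i : ι => f (some i)) μ := by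
  classical
  rw [iIndepFun_iff_measure_inter_preimage_eq_mul] at hf ⊢
  intro S sets hsets
  have key := hf (S.image some)
    (sets := fun o => Option.elim o Set.univ sets) ?_
  · have h1 : (⋂ o ∈ S.image some, f o ⁻¹' (Option.elim o Set.univ sets))
        = ⋂ i ∈ S, f (some i) ⁻¹' sets i := by
      ext ω
      simp [Finset.mem_image]
    have h2 : (∏ o ∈ S.image some, μ (f o ⁻¹' (Option.elim o Set.univ sets)))
        = ∏ i ∈ S, μ (f (some i) ⁻¹' sets i) := by
      rw [Finset.prod_image (fun a _ b _ hab => Option.some_injective _ hab)]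
      rfl
    rw [h1, h2] at key
    exact key
  · intro o ho
    rw [Finset.mem_image] at ho
    obtain ⟨i, hi, rfl⟩ := ho
    exact hsets i hi


set_option maxHeartbeats 1000000 in
/-- For a user with desired fading `g ~ Exp(1)` and independent interfering
fadings `h i ~ Exp(1)` (over a nonempty finite index set), distances `d i > 0`,
distance `r > 0`, path loss exponent `α ≥ 2` and noise-to-power ratio `N ≥ 0`,
the coverage probability of the SINR `η = g r^{-α} / (N + ∑ i, h i * d i^{-α})` at any
threshold `T ≥ 0` is `e^{-T r^α N} ∏ i, (1 + T r^α d i^{-α})⁻¹`. -/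
theorem coverage_probability_FR1
    {Ω : Type*} [MeasurableSpace Ω] (μ : Measure Ω) [IsProbabilityMeasure μ]
    {ι : Type*} [Fintype ι] [Nonempty ι]
    (g : Ω → ℝ) (h : ι → Ω → ℝ)
    (hg_meas : Measurable g) (hh_meas : ∀ i, Measurable (h i))
    (hg_exp : Measure.map g μ = expMeasure 1)
    (hh_exp : ∀ i, Measure.map (h i) μ = expMeasure 1)
    (h_indep : iIndepFun
      (fun o : Option ι => Option.elim o g h) μ)
    (r α N : ℝ) (hr : 0 < r) (hα : 2 ≤ α) (hN : 0 ≤ N)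
    (d : ι → ℝ) (hd : ∀ i, 0 < d i)
    (T : ℝ) (hT : 0 ≤ T) :
    (μ {ω | T < g ω * r ^ (-α) / (N + ∑ i, h i ω * d i ^ (-α))}).toReal
      = Real.exp (-(T * r ^ α * N)) * ∏ i, (1 + T * r ^ α * d i ^ (-α))⁻¹ := by
  classical
  set c : ℝ := T * r ^ α with hc
  have hra : (0:ℝ) < r ^ α := rpow_pos_of_pos hr α
  have hc0 : 0 ≤ c := mul_nonneg hT hra.le
  have hw0 : ∀ i, (0:ℝ) < d i ^ (-α) := fun i => rpow_pos_of_pos (hd i) _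
  set S : Ω → ℝ := fun ω => ∑ i, h i ω * d i ^ (-α) with hSdef
  have hS_meas : Measurable S :=
    Finset.measurable_sum _ fun i _ => (hh_meas i).mul_const _
  -- a.e. positivity of each h i and of S
  have hh_pos : ∀ i, ∀ᵐ ω ∂μ, 0 < h i ω := by
    intro i
    have h0 : μ (h i ⁻¹' Iic 0) = 0 := by
      rw [← Measure.map_apply (hh_meas i) measurableSet_Iic, hh_exp i, expMeasure_Iic_zero]
    rw [ae_iff]
    convert h0 using 2
    ext ω
    simp [not_lt]
  have hS_pos : ∀ᵐ ω ∂μ, 0 < S ω := by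
    filter_upwards [ae_all_iff.2 hh_pos] with ω hω
    exact Finset.sum_pos (fun i _ => mul_pos (hω i) (hw0 i)) Finset.univ_nonempty
  -- rewrite the event a.e.
  have hevent : {ω | T < g ω * r ^ (-α) / (N + ∑ i, h i ω * d i ^ (-α))}
      =ᵐ[μ] {ω | c * (N + S ω) < g ω} := by
    filter_upwards [hS_pos] with ω hω
    have hD : 0 < N + S ω := by linarith
    simp only [eq_iff_iff]
    change T < g ω * r ^ (-α) / (N + S ω) ↔ c * (N + S ω) < g ω
    rw [Real.rpow_neg hr.le, ← div_eq_mul_inv, div_div, lt_div_iff₀ (mul_pos hra hD)]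
    constructor
    · intro h1
      nlinarith
    · intro h1
      nlinarith
  rw [measure_congr hevent]
  -- independence of g and S
  have h_meas_all : ∀ o : Option ι, Measurable (Option.elim o g h) := by
    intro o
    cases o with
    | none => exact hg_meas
    | some i => exact hh_meas i
  have hgS : IndepFun S g μ := by
    have h2 := h_indep.indepFun_finset ({none} : Finset (Option ι))
      (Finset.univ.image some) (by simp) h_meas_all
    let φ : (∀ x : ({none} : Finset (Option ι)), ℝ) → ℝ :=
      fun v => v ⟨none, Finset.mem_singleton_self none⟩
    let ψ : (∀ x : ((Finset.univ.image some) : Finset (Option ι)), ℝ) → ℝ :=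
      fun v => ∑ i : ι, v ⟨some i, by simp⟩ * d i ^ (-α)
    have hφ : Measurable φ := measurable_pi_apply _
    have hψ : Measurable ψ :=
      Finset.measurable_sum _ fun i _ => (measurable_pi_apply _).mul_const _
    exact (h2.comp hφ hψ).symm
  have hmap : μ.map (fun ω => (S ω, g ω)) = (μ.map S).prod (μ.map g) :=
    (indepFun_iff_map_prod_eq_prod_map_map hS_meas.aemeasurable hg_meas.aemeasurable).1 hgS
  have hA : MeasurableSet {p : ℝ × ℝ | c * (N + p.1) < p.2} :=
    measurableSet_lt (measurable_const.mul (measurable_const.add measurable_fst))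
      measurable_snd
  have step1 : μ {ω | c * (N + S ω) < g ω}
      = ∫⁻ s, (μ.map g) (Ioi (c * (N + s))) ∂(μ.map S) := by
    have : μ {ω | c * (N + S ω) < g ω}
        = μ.map (fun ω => (S ω, g ω)) {p : ℝ × ℝ | c * (N + p.1) < p.2} := by
      rw [Measure.map_apply (hS_meas.prodMk hg_meas) hA]
      rfl
    rw [this, hmap, Measure.prod_apply hA]
    exact lintegral_congr fun s => rfl
  rw [step1]
  -- a.e. rewrite of inner measure
  have hae_pos : ∀ᵐ s ∂(μ.map S), 0 < s := by
    rw [ae_map_iff hS_meas.aemeasurable (by exact measurableSet_Ioi : MeasurableSet {x : ℝ | 0 < x})]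
    exact hS_pos
  have step2 : ∫⁻ s, (μ.map g) (Ioi (c * (N + s))) ∂(μ.map S)
      = ∫⁻ s, ENNReal.ofReal (rexp (-(c * (N + s)))) ∂(μ.map S) := by
    refine lintegral_congr_ae ?_
    filter_upwards [hae_pos] with s hs
    rw [hg_exp, expMeasure_Ioi (by positivity)]
  rw [step2, lintegral_map (by fun_prop) hS_meas]
  have step3 : ∀ ω, ENNReal.ofReal (rexp (-(c * (N + S ω))))
      = ENNReal.ofReal (rexp (-(c * N))) * ENNReal.ofReal (rexp (-(c * S ω))) := by
    intro ω
    rw [← ENNReal.ofReal_mul (exp_pos _).le, ← Real.exp_add]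
    ring_nf
  simp only [step3]
  rw [lintegral_const_mul _ (by fun_prop)]
  -- the lintegral equals ofReal of the mgf
  have hfin : ∫⁻ ω, ENNReal.ofReal (rexp (-(c * S ω))) ∂μ ≠ ⊤ := by
    have hle : ∫⁻ ω, ENNReal.ofReal (rexp (-(c * S ω))) ∂μ ≤ 1 := by
      calc ∫⁻ ω, ENNReal.ofReal (rexp (-(c * S ω))) ∂μ
          ≤ ∫⁻ _, 1 ∂μ := by
            refine lintegral_mono_ae ?_
            filter_upwards [hS_pos] with ω hω
            exact le_trans (ENNReal.ofReal_le_one.2 (exp_le_one_iff.2 (by nlinarith)))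
              le_rfl
        _ = 1 := by simp
    exact ne_top_of_le_ne_top ENNReal.one_ne_top hle
  have hmgf : ∫⁻ ω, ENNReal.ofReal (rexp (-(c * S ω))) ∂μ
      = ENNReal.ofReal (mgf S μ (-c)) := by
    have : mgf S μ (-c) = (∫⁻ ω, ENNReal.ofReal (rexp (-(c * S ω))) ∂μ).toReal := by
      rw [mgf]
      rw [integral_eq_lintegral_of_nonneg_ae (ae_of_all _ fun ω => (exp_pos _).le)
        ((hS_meas.const_mul (-c)).exp.aestronglyMeasurable)]
      simp [neg_mul]
    rw [this, ENNReal.ofReal_toReal hfin]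
  rw [hmgf]
  -- compute the mgf via independence
  have hX_indep : iIndepFun
      (fun i => fun ω => h i ω * d i ^ (-α)) μ := by
    have h1 : iIndepFun h μ := iIndepFun_some h_indep
    exact h1.comp (fun i => fun x => x * d i ^ (-α)) fun i => measurable_mul_const _
  have hSsum : S = ∑ i, (fun ω => h i ω * d i ^ (-α)) := by
    funext ω
    rw [Finset.sum_apply]
  have hmgfS : mgf S μ (-c) = ∏ i, (1 + c * d i ^ (-α))⁻¹ := by
    rw [hSsum, hX_indep.mgf_sum (fun i => (hh_meas i).mul_const _) Finset.univ]
    refine Finset.prod_congr rfl fun i _ => ?_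
    have hXi : mgf (fun ω => h i ω * d i ^ (-α)) μ (-c)
        = ∫ x, rexp (-(c * d i ^ (-α)) * x) ∂(μ.map (h i)) := by
      rw [mgf, integral_map (f := fun x => rexp (-(c * d i ^ (-α)) * x))
        (hh_meas i).aemeasurable
        ((measurable_id.const_mul _).exp.aestronglyMeasurable)]
      refine integral_congr_ae (ae_of_all _ fun ω => ?_)
      show rexp (-c * (h i ω * d i ^ (-α))) = rexp (-(c * d i ^ (-α)) * h i ω)
      congr 1
      ring
    rw [hXi, hh_exp i, integral_exp_neg_mul_expMeasure (mul_nonneg hc0 (hw0 i).le)]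
  rw [hmgfS]
  rw [ENNReal.toReal_mul, ENNReal.toReal_ofReal (exp_pos _).le,
    ENNReal.toReal_ofReal (Finset.prod_nonneg fun i _ =>
      inv_nonneg.2 (by have := mul_nonneg hc0 (hw0 i).le; linarith))]
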